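/- The Banach space ℓ∞ of bounded real sequences with the supremum norm is not weakly Hahn-Banach smooth: there exists Λ ∈ (ℓ∞)* attaining its norm on the closed unit ball of ℓ∞ and two distinct functionals G₁ ≠ G₂ in (ℓ∞)*** such that G₁ ∘ ι_{ℓ∞} = G₂ ∘ ι_{ℓ∞} = Λ and ‖G₁‖ = ‖G₂‖ = ‖Λ‖, where ι_{ℓ∞} : ℓ∞ → (ℓ∞)** is the canonical embedding into the bidual. -/

import Mathlib

open NormedSpace Filter Topology

noncomputable section

set_option maxHeartbeats 1000000
set_option synthInstance.maxHeartbeats 400000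

/-- The space `ℓ∞` of bounded real sequences with the supremum norm. -/
abbrev ellInfty : Type := lp (fun _ : ℕ => ℝ) ⊤

/-- The operator norm on the triple dual of `ℓ∞` (instance search no longer finds it by itself). -/
instance : Norm (StrongDual ℝ (StrongDual ℝ (StrongDual ℝ ellInfty))) :=
  ContinuousLinearMap.hasOpNorm (E := StrongDual ℝ (StrongDual ℝ ellInfty)) (F := ℝ) (σ₁₂ := RingHom.id ℝ)

namespace Stmt2Aux

open Hyperreal

lemma abs_apply_le_norm (x : ellInfty) (n : ℕ) : |(x : ∀ _ : ℕ, ℝ) n| ≤ ‖x‖ := by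
  have := lp.norm_apply_le_norm (E := fun _ : ℕ => ℝ) ENNReal.top_ne_zero x n
  rwa [Real.norm_eq_abs] at this

/-- The coordinate functional `x ↦ x n` on `ℓ∞`. -/
def coordL (n : ℕ) : ellInfty →L[ℝ] ℝ :=
  LinearMap.mkContinuous
    { toFun := fun x => x n
      map_add' := fun x y => rfl
      map_smul' := fun c x => rfl } 1
    (fun x => by
      rw [one_mul, Real.norm_eq_abs]
      exact abs_apply_le_norm x n)

lemma coordL_apply (n : ℕ) (x : ellInfty) : coordL n x = x n := rfl

lemma norm_coordL_le (n : ℕ) : ‖coordL n‖ ≤ 1 :=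
  LinearMap.mkContinuous_norm_le _ zero_le_one _

/-- The `n`-th unit vector in `ℓ∞`. -/
def eVec (n : ℕ) : ellInfty :=
  ⟨Pi.single n 1, memℓp_infty ⟨1, by
    rintro r ⟨m, rfl⟩
    dsimp only
    rw [Real.norm_eq_abs, Pi.single_apply]
    split <;> simp⟩⟩

lemma eVec_coe (n : ℕ) : ((eVec n : ellInfty) : ∀ _ : ℕ, ℝ) = Pi.single n 1 := rfl

lemma ofSeq_le_ofSeq {f g : ℕ → ℝ} (h : ∀ n, f n ≤ g n) : ofSeq f ≤ ofSeq g :=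
  Germ.coe_le.2 (Eventually.of_forall h)

lemma abs_ofSeq_le (x : ellInfty) : |ofSeq (x : ∀ _ : ℕ, ℝ)| ≤ ((‖x‖ : ℝ) : ℝ*) := by
  refine abs_le.2 ⟨?_, ?_⟩
  · calc -((‖x‖ : ℝ) : ℝ*) = ofSeq (fun _ => -‖x‖) := rfl
      _ ≤ ofSeq (x : ∀ _ : ℕ, ℝ) :=
        ofSeq_le_ofSeq (fun n => (abs_le.1 (abs_apply_le_norm x n)).1)
  · calc ofSeq (x : ∀ _ : ℕ, ℝ) ≤ ofSeq (fun _ => ‖x‖) :=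
        ofSeq_le_ofSeq (fun n => (abs_le.1 (abs_apply_le_norm x n)).2)
      _ = ((‖x‖ : ℝ) : ℝ*) := rfl

lemma not_infinite_ofSeq (x : ellInfty) : ¬ Infinite (ofSeq (x : ∀ _ : ℕ, ℝ)) := by
  intro h
  have h2 := (infinite_iff_abs_lt_abs.1 h) ‖x‖
  have h3 : |((‖x‖ : ℝ) : ℝ*)| = ((‖x‖ : ℝ) : ℝ*) :=
    abs_of_nonneg (coe_nonneg.2 (norm_nonneg x))
  rw [h3] at h2
  exact absurd (h2.trans_le (abs_ofSeq_le x)) (lt_irrefl _)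

lemma st_ofSeq_le (x : ellInfty) : |st (ofSeq (x : ∀ _ : ℕ, ℝ))| ≤ ‖x‖ := by
  have h := abs_le.1 (abs_ofSeq_le x)
  have h1 : ((-‖x‖ : ℝ) : ℝ*) ≤ ofSeq (x : ∀ _ : ℕ, ℝ) := by
    rw [coe_neg]; exact h.1
  have l1 := st_le_of_le (not_infinite_real _) (not_infinite_ofSeq x) h1
  have l2 := st_le_of_le (not_infinite_ofSeq x) (not_infinite_real _) h.2
  rw [st_id_real] at l1 l2
  exact abs_le.2 ⟨l1, l2⟩

/-- The generalized limit functional on `ℓ∞`, via the standard part of hyperreals. -/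
def Lam : StrongDual ℝ ellInfty :=
  LinearMap.mkContinuous
    { toFun := fun x => st (ofSeq (x : ∀ _ : ℕ, ℝ))
      map_add' := fun x y => by
        show st (ofSeq ((x + y : ellInfty) : ∀ _ : ℕ, ℝ))
          = st (ofSeq (x : ∀ _ : ℕ, ℝ)) + st (ofSeq (y : ∀ _ : ℕ, ℝ))
        have h : ofSeq ((x + y : ellInfty) : ∀ _ : ℕ, ℝ)
            = ofSeq (x : ∀ _ : ℕ, ℝ) + ofSeq (y : ∀ _ : ℕ, ℝ) := rfl
        rw [h, st_add (not_infinite_ofSeq x) (not_infinite_ofSeq y)]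
      map_smul' := fun c x => by
        show st (ofSeq ((c • x : ellInfty) : ∀ _ : ℕ, ℝ))
          = c * st (ofSeq (x : ∀ _ : ℕ, ℝ))
        have h : ofSeq ((c • x : ellInfty) : ∀ _ : ℕ, ℝ)
            = ((c : ℝ) : ℝ*) * ofSeq (x : ∀ _ : ℕ, ℝ) := rfl
        rw [h, st_mul (not_infinite_real c) (not_infinite_ofSeq x), st_id_real] } 1
    (fun x => by
      rw [one_mul, Real.norm_eq_abs]
      exact st_ofSeq_le x)

lemma Lam_apply (x : ellInfty) : Lam x = st (ofSeq (x : ∀ _ : ℕ, ℝ)) := rfl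

lemma Lam_one : Lam (1 : ellInfty) = 1 := by
  rw [Lam_apply]
  have h : ofSeq ((1 : ellInfty) : ∀ _ : ℕ, ℝ) = ((1 : ℝ) : ℝ*) := rfl
  rw [h, st_id_real]

lemma Lam_eVec (n : ℕ) : Lam (eVec n) = 0 := by
  rw [Lam_apply]
  have h0 : ofSeq ((eVec n : ellInfty) : ∀ _ : ℕ, ℝ) = ((0 : ℝ) : ℝ*) := by
    refine Germ.coe_eq.2 ?_
    refine Eventually.filter_mono hyperfilter_le_cofinite ?_
    refine eventually_cofinite.2 (Set.Finite.subset (Set.finite_singleton n) ?_)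
    intro m hm
    simp only [Set.mem_setOf_eq, eVec_coe, Pi.single_apply] at hm
    by_contra hmn
    simp only [Set.mem_singleton_iff] at hmn
    exact hm (if_neg hmn)
  rw [h0, st_id_real]

lemma norm_Lam_le : ‖Lam‖ ≤ 1 := LinearMap.mkContinuous_norm_le _ zero_le_one _

lemma norm_one_ell : ‖(1 : ellInfty)‖ = 1 := by
  refine le_antisymm (lp.norm_le_of_forall_le zero_le_one fun i => ?_) ?_
  · show ‖((1 : ellInfty) : ∀ _ : ℕ, ℝ) i‖ ≤ 1
    norm_num [lp.infty_coeFn_one]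
  · have h := lp.norm_apply_le_norm (E := fun _ : ℕ => ℝ) ENNReal.top_ne_zero
      (1 : ellInfty) 0
    have h2 : ‖((1 : ellInfty) : ∀ _ : ℕ, ℝ) 0‖ = 1 := by
      norm_num [lp.infty_coeFn_one]
    rwa [h2] at h

lemma norm_Lam : ‖Lam‖ = 1 := by
  refine le_antisymm norm_Lam_le ?_
  have h := Lam.le_opNorm (1 : ellInfty)
  rw [Lam_one, norm_one_ell, mul_one] at h
  simpa using h

instance : Norm (StrongDual ℝ (StrongDual ℝ ellInfty) →L[ℝ] ellInfty) :=
  ContinuousLinearMap.hasOpNorm (E := StrongDual ℝ (StrongDual ℝ ellInfty)) (F := ellInfty) (σ₁₂ := RingHom.id ℝ)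

/-- The coordinate-reading map `(ℓ∞)** → ℓ∞`, `Ψ ↦ (Ψ δₙ)ₙ`. -/
def Rmap : StrongDual ℝ (StrongDual ℝ ellInfty) →L[ℝ] ellInfty :=
  LinearMap.mkContinuous
    { toFun := fun (Ψ : StrongDual ℝ (StrongDual ℝ ellInfty)) => (⟨fun n => Ψ (coordL n), memℓp_infty ⟨‖Ψ‖, by
        rintro r ⟨n, rfl⟩
        calc ‖Ψ (coordL n)‖ ≤ ‖Ψ‖ * ‖coordL n‖ := Ψ.le_opNorm _
          _ ≤ ‖Ψ‖ * 1 := mul_le_mul_of_nonneg_left (norm_coordL_le n) (norm_nonneg Ψ)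
          _ = ‖Ψ‖ := mul_one _⟩⟩ : ellInfty)
      map_add' := fun Ψ Φ => by
        apply Subtype.ext
        funext n
        rfl
      map_smul' := fun c Ψ => by
        apply Subtype.ext
        funext n
        rfl } 1
    (fun Ψ => by
      rw [one_mul]
      refine lp.norm_le_of_forall_le (norm_nonneg Ψ) fun n => ?_
      calc ‖Ψ (coordL n)‖ ≤ ‖Ψ‖ * ‖coordL n‖ := Ψ.le_opNorm _
        _ ≤ ‖Ψ‖ * 1 := mul_le_mul_of_nonneg_left (norm_coordL_le n) (norm_nonneg Ψ)
        _ = ‖Ψ‖ := mul_one _)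

lemma Rmap_apply (Ψ : StrongDual ℝ (StrongDual ℝ ellInfty)) (n : ℕ) :
    (Rmap Ψ : ∀ _ : ℕ, ℝ) n = Ψ (coordL n) := rfl

lemma norm_Rmap_le : ‖Rmap‖ ≤ 1 := LinearMap.mkContinuous_norm_le _ zero_le_one _

lemma Rmap_incl (x : ellInfty) : Rmap (inclusionInDoubleDual ℝ ellInfty x) = x := by
  apply Subtype.ext
  funext n
  rfl

/-- Partial sums of `|f (eVec i)|` are bounded by `‖f‖`. -/
lemma sum_range_abs_le (f : StrongDual ℝ ellInfty) (N : ℕ) :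
    ∑ i ∈ Finset.range N, |f (eVec i)| ≤ ‖f‖ := by
  classical
  set sg : ℕ → ℝ := fun i => if 0 ≤ f (eVec i) then 1 else -1 with hsg
  set v : ellInfty := ∑ i ∈ Finset.range N, sg i • eVec i with hv
  have hvm : ∀ m : ℕ, (v : ∀ _ : ℕ, ℝ) m = if m ∈ Finset.range N then sg m else 0 := by
    intro m
    have h1 : (v : ∀ _ : ℕ, ℝ) = ∑ i ∈ Finset.range N, (sg i • (eVec i : ∀ _ : ℕ, ℝ)) := by
      simp only [hv, lp.coeFn_sum, lp.coeFn_smul]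
    rw [h1, Finset.sum_apply]
    have h2 : ∀ i, (sg i • (eVec i : ∀ _ : ℕ, ℝ)) m = if m = i then sg i else 0 := by
      intro i
      simp only [Pi.smul_apply, eVec_coe, Pi.single_apply, smul_eq_mul]
      by_cases h : m = i <;> simp [h]
    simp_rw [h2]
    exact Finset.sum_ite_eq (Finset.range N) m sg
  have hvnorm : ‖v‖ ≤ 1 := by
    refine lp.norm_le_of_forall_le zero_le_one fun m => ?_
    show ‖(v : ∀ _ : ℕ, ℝ) m‖ ≤ 1
    rw [hvm m, Real.norm_eq_abs]
    by_cases h : m ∈ Finset.range N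
    · by_cases h2 : 0 ≤ f (eVec m) <;> simp [hsg, h, h2]
    · simp [h]
  have hfv : f v = ∑ i ∈ Finset.range N, |f (eVec i)| := by
    rw [hv, map_sum]
    congr 1
    funext i
    rw [map_smul, smul_eq_mul]
    by_cases h : 0 ≤ f (eVec i)
    · simp [hsg, h, abs_of_nonneg h]
    · push_neg at h
      simp [hsg, not_le.2 h, abs_of_neg h]
  calc ∑ i ∈ Finset.range N, |f (eVec i)| = f v := hfv.symm
    _ ≤ |f v| := le_abs_self _
    _ ≤ ‖f‖ * ‖v‖ := by
        have := f.le_opNorm v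
        rwa [Real.norm_eq_abs] at this
    _ ≤ ‖f‖ * 1 := mul_le_mul_of_nonneg_left hvnorm (norm_nonneg f)
    _ = ‖f‖ := mul_one _

lemma summable_abs_eVec (f : StrongDual ℝ ellInfty) :
    Summable fun n => |f (eVec n)| :=
  summable_of_sum_range_le (fun n => abs_nonneg _) (sum_range_abs_le f)

lemma summable_eVec (f : StrongDual ℝ ellInfty) :
    Summable fun n => f (eVec n) :=
  summable_abs_iff.1 (summable_abs_eVec f)

lemma tsum_abs_le (f : StrongDual ℝ ellInfty) :
    ∑' n, |f (eVec n)| ≤ ‖f‖ :=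
  Real.tsum_le_of_sum_range_le (fun n => abs_nonneg _) (sum_range_abs_le f)

/-- The functional `Ψ₀ : f ↦ f 1 - ∑' n, f (eₙ)` on `(ℓ∞)*`. -/
def Psi0 : StrongDual ℝ (StrongDual ℝ ellInfty) :=
  LinearMap.mkContinuous
    { toFun := fun f => f (1 : ellInfty) - ∑' n, f (eVec n)
      map_add' := fun f g => by
        show (f + g) (1 : ellInfty) - ∑' n, (f + g) (eVec n) = _
        simp only [ContinuousLinearMap.add_apply]
        rw [Summable.tsum_add (summable_eVec f) (summable_eVec g)]
        ring
      map_smul' := fun c f => by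
        show (c • f) (1 : ellInfty) - ∑' n, (c • f) (eVec n) = _
        simp only [ContinuousLinearMap.coe_smul', Pi.smul_apply, smul_eq_mul,
          RingHom.id_apply]
        rw [tsum_mul_left]
        ring } 2
    (fun f => by
      show ‖f (1 : ellInfty) - ∑' n, f (eVec n)‖ ≤ 2 * ‖f‖
      have h1 : |f (1 : ellInfty)| ≤ ‖f‖ := by
        have := f.le_opNorm (1 : ellInfty)
        rwa [Real.norm_eq_abs, norm_one_ell, mul_one] at this
      have h2 : |∑' n, f (eVec n)| ≤ ‖f‖ := by
        have habs : |∑' n, f (eVec n)| ≤ ∑' n, |f (eVec n)| := by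
          have := norm_tsum_le_tsum_norm (f := fun n => f (eVec n))
            (by simpa [Real.norm_eq_abs] using summable_abs_eVec f)
          simpa [Real.norm_eq_abs] using this
        exact habs.trans (tsum_abs_le f)
      calc ‖f (1 : ellInfty) - ∑' n, f (eVec n)‖
          ≤ |f (1 : ellInfty)| + |∑' n, f (eVec n)| := by
            rw [Real.norm_eq_abs]
            exact abs_sub _ _
        _ ≤ ‖f‖ + ‖f‖ := add_le_add h1 h2
        _ = 2 * ‖f‖ := by ring)

lemma Psi0_apply (f : StrongDual ℝ ellInfty) :
    Psi0 f = f (1 : ellInfty) - ∑' n, f (eVec n) := rfl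

lemma Psi0_Lam : Psi0 Lam = 1 := by
  rw [Psi0_apply, Lam_one]
  have h : (fun n : ℕ => Lam (eVec n)) = fun _ => (0 : ℝ) := by
    funext n; exact Lam_eVec n
  rw [h, tsum_zero]
  ring

lemma coordL_one (n : ℕ) : coordL n (1 : ellInfty) = 1 := rfl

lemma coordL_eVec (n m : ℕ) : coordL n (eVec m) = if m = n then 1 else 0 := by
  rw [coordL_apply]
  rw [show ((eVec m : ellInfty) : ∀ _ : ℕ, ℝ) = Pi.single m 1 from rfl, Pi.single_apply]
  simp [eq_comm]

lemma Psi0_coordL (n : ℕ) : Psi0 (coordL n) = 0 := by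
  rw [Psi0_apply, coordL_one]
  have h : (fun m : ℕ => coordL n (eVec m)) = fun m => if m = n then (1 : ℝ) else 0 := by
    funext m; exact coordL_eVec n m
  rw [h, tsum_ite_eq]
  ring

lemma Rmap_Psi0 : Rmap Psi0 = 0 := by
  apply Subtype.ext
  funext n
  show (Rmap Psi0 : ∀ _ : ℕ, ℝ) n = 0
  rw [Rmap_apply, Psi0_coordL]

end Stmt2Aux

open Stmt2Aux

/-- `ℓ∞` is not weakly Hahn-Banach smooth: there is a norm-attaining
functional `Λ ∈ (ℓ∞)*` admitting two distinct norm-preserving extensions to `(ℓ∞)**`,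
i.e. two distinct `G₁, G₂ ∈ (ℓ∞)***` restricting to `Λ` along the canonical embedding
`ι : ℓ∞ → (ℓ∞)**` and with `‖G₁‖ = ‖G₂‖ = ‖Λ‖`. -/
theorem stmt_2 :
    ∃ Λ : StrongDual ℝ ellInfty,
      (∃ x : ellInfty, ‖x‖ = 1 ∧ |Λ x| = ‖Λ‖) ∧
      ∃ G₁ G₂ : StrongDual ℝ (StrongDual ℝ (StrongDual ℝ ellInfty)),
        G₁ ≠ G₂ ∧
        (∀ x : ellInfty, G₁ (inclusionInDoubleDual ℝ ellInfty x) = Λ x) ∧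
        (∀ x : ellInfty, G₂ (inclusionInDoubleDual ℝ ellInfty x) = Λ x) ∧
        ‖G₁‖ = ‖Λ‖ ∧ ‖G₂‖ = ‖Λ‖ := by
  refine ⟨Lam, ⟨1, norm_one_ell, by rw [Lam_one, norm_Lam]; norm_num⟩, ?_⟩
  set G₁ : StrongDual ℝ (StrongDual ℝ (StrongDual ℝ ellInfty)) :=
    inclusionInDoubleDual ℝ (StrongDual ℝ ellInfty) Lam with hG₁
  set G₂ : StrongDual ℝ (StrongDual ℝ (StrongDual ℝ ellInfty)) := Lam.comp Rmap with hG₂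
  have hG1app : ∀ Ψ : StrongDual ℝ (StrongDual ℝ ellInfty), G₁ Ψ = Ψ Lam := fun Ψ => rfl
  have hG2app : ∀ Ψ : StrongDual ℝ (StrongDual ℝ ellInfty), G₂ Ψ = Lam (Rmap Ψ) := fun Ψ => rfl
  have hne : G₁ ≠ G₂ := by
    intro h
    have h1 : G₁ Psi0 = 1 := by rw [hG1app, Psi0_Lam]
    have h2 : G₂ Psi0 = 0 := by rw [hG2app, Rmap_Psi0, map_zero]
    rw [h, h2] at h1
    norm_num at h1
  have hr1 : ∀ x : ellInfty, G₁ (inclusionInDoubleDual ℝ ellInfty x) = Lam x :=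
    fun x => rfl
  have hr2 : ∀ x : ellInfty, G₂ (inclusionInDoubleDual ℝ ellInfty x) = Lam x := by
    intro x
    rw [hG2app, Rmap_incl]
  have hn1 : ‖G₁‖ = ‖Lam‖ :=
    (inclusionInDoubleDualLi ℝ (E := StrongDual ℝ ellInfty)).norm_map Lam
  have hn2 : ‖G₂‖ = ‖Lam‖ := by
    refine le_antisymm ?_ ?_
    · refine ContinuousLinearMap.opNorm_le_bound _ (norm_nonneg _) fun Ψ => ?_
      rw [hG2app]
      calc ‖Lam (Rmap Ψ)‖ ≤ ‖Lam‖ * ‖Rmap Ψ‖ := Lam.le_opNorm _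
        _ ≤ ‖Lam‖ * ‖Ψ‖ := by
          refine mul_le_mul_of_nonneg_left (lp.norm_le_of_forall_le (norm_nonneg Ψ) fun n => ?_) (norm_nonneg _)
          rw [Rmap_apply]
          calc ‖Ψ (coordL n)‖ ≤ ‖Ψ‖ * ‖coordL n‖ := Ψ.le_opNorm _
            _ ≤ ‖Ψ‖ * 1 := mul_le_mul_of_nonneg_left (norm_coordL_le n) (norm_nonneg Ψ)
            _ = ‖Ψ‖ := mul_one _
    · have h1 : G₂ (inclusionInDoubleDual ℝ ellInfty 1) = 1 := by rw [hr2, Lam_one]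
      have h2 : ‖inclusionInDoubleDual ℝ ellInfty (1 : ellInfty)‖ = 1 := by
        rw [show inclusionInDoubleDual ℝ ellInfty (1 : ellInfty)
            = inclusionInDoubleDualLi ℝ (E := ellInfty) (1 : ellInfty) from rfl,
          (inclusionInDoubleDualLi ℝ (E := ellInfty)).norm_map, norm_one_ell]
      have h3 := ContinuousLinearMap.le_opNorm (𝕜 := ℝ) (𝕜₂ := ℝ) (E := StrongDual ℝ (StrongDual ℝ ellInfty)) (F := ℝ) G₂ (inclusionInDoubleDual ℝ ellInfty 1)
      rw [h1, h2, mul_one] at h3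
      rw [norm_Lam]
      simpa using h3
  exact ⟨G₁, G₂, hne, hr1, hr2, hn1, hn2⟩
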